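/- Lemma A.2 (strong spatial mixing of the hard-core model, stated as used in the paper): For a hard-core model Θ on a graph (V, E) with maximal degree Δ, there exists a critical value λ_c > 0 depending on Δ such that for any activity 0 < λ < λ_c there exist constants c, γ > 0, depending on λ and Δ, such that for any vertex v ∈ V, any set of vertices S₁ ⊂ V, any τ ∈ {0,1}, and any configurations η, η' ∈ {0,1}^{S₁}, |ℙ(Θ_v = τ | Θ_{S₁} = η) − ℙ(Θ_v = τ | Θ_{S₁} = η')| ≤ c·exp(−γ·d̃(v, η, η')), where d̃(v, η, η') = min{ d(v,w) : η_w ≠ η'_w } is the smallest graph distance from v to a vertex of S₁ on which η and η' differ. -/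

import Mathlib

/-!
Lemma A.2 (strong spatial mixing of the hard-core model, as used in the paper, after
Corollary 2.6 of Weitz 2006): for a hard-core model `Θ` on a graph `(V,E)` with maximal
degree `Δ` there is a critical activity `λ_c > 0` depending on `Δ` such that for any
`0 < λ < λ_c` there are constants `c, γ > 0` depending on `λ` and `Δ` with
`|ℙ(Θ_v = τ | Θ_{S₁} = η) − ℙ(Θ_v = τ | Θ_{S₁} = η')| ≤ c exp(−γ d̃(v,η,η'))`,
where `d̃(v,η,η') = min{ d(v,w) : w ∈ S₁, η_w ≠ η'_w }` is the smallest graph distance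
from `v` to a vertex of `S₁` on which `η` and `η'` differ.
-/

open MeasureTheory ProbabilityTheory Filter Finset
open scoped ENNReal ProbabilityTheory

noncomputable section

namespace HardCore

/-- A configuration is admissible (independent) if no edge has both endpoints
occupied. -/
def Admissible {V : Type} (Gr : SimpleGraph V) (η : V → Bool) : Prop :=
  ∀ v w : V, Gr.Adj v w → ¬(η v = true ∧ η w = true)

instance {V : Type} [Fintype V] (Gr : SimpleGraph V) [DecidableRel Gr.Adj]
    (η : V → Bool) : Decidable (Admissible Gr η) := by
  unfold Admissible; infer_instance

/-- The number of occupied sites of a configuration. -/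
def numOcc {V : Type} [Fintype V] [DecidableEq V] (η : V → Bool) : ℕ :=
  (Finset.univ.filter (fun v => η v = true)).card

/-- The hard-core partition function `Z_λ = Σ_{η admissible} λ^{|η|}`. -/
def partition {V : Type} [Fintype V] [DecidableEq V]
    (Gr : SimpleGraph V) [DecidableRel Gr.Adj] (lam : ℝ) : ℝ :=
  ∑ η : V → Bool, if Admissible Gr η then lam ^ numOcc η else 0

/-- The hard-core probability of a configuration:
`λ^{|η|}/Z_λ` if `η` is admissible, `0` otherwise. -/
def hcProb {V : Type} [Fintype V] [DecidableEq V]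
    (Gr : SimpleGraph V) [DecidableRel Gr.Adj] (lam : ℝ) (η : V → Bool) : ℝ :=
  if Admissible Gr η then lam ^ numOcc η / partition Gr lam else 0

variable {V : Type} [Fintype V] [DecidableEq V] (Gr : SimpleGraph V) [DecidableRel Gr.Adj]
  (lam : ℝ)

/-- Constrained partition function. -/
def Z (S : Finset V) (η : V → Bool) : ℝ :=
  ∑ σ ∈ univ.filter (fun σ : V → Bool => Admissible Gr σ ∧ ∀ w ∈ S, σ w = η w),
    lam ^ numOcc σ

/-- Constrained partition function with one extra vertex pinned. -/
def ZV (v : V) (τ : Bool) (S : Finset V) (η : V → Bool) : ℝ :=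
  ∑ σ ∈ univ.filter
      (fun σ : V → Bool => Admissible Gr σ ∧ (∀ w ∈ S, σ w = η w) ∧ σ v = τ),
    lam ^ numOcc σ

/-- The conditional probability that `v` has value `τ` given `η` on `S`. -/
def pr (v : V) (τ : Bool) (S : Finset V) (η : V → Bool) : ℝ :=
  ZV Gr lam v τ S η / Z Gr lam S η

variable {Gr lam}

lemma Z_nonneg (hl : 0 < lam) (S : Finset V) (η : V → Bool) : 0 ≤ Z Gr lam S η :=
  Finset.sum_nonneg fun _ _ => pow_nonneg hl.le _

lemma ZV_nonneg (hl : 0 < lam) (v : V) (τ : Bool) (S : Finset V) (η : V → Bool) :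
    0 ≤ ZV Gr lam v τ S η :=
  Finset.sum_nonneg fun _ _ => pow_nonneg hl.le _

lemma ZV_le_Z (hl : 0 < lam) (v : V) (τ : Bool) (S : Finset V) (η : V → Bool) :
    ZV Gr lam v τ S η ≤ Z Gr lam S η := by
  apply Finset.sum_le_sum_of_subset_of_nonneg
  · intro σ hσ
    simp only [mem_filter, mem_univ, true_and] at *
    exact ⟨hσ.1, hσ.2.1⟩
  · intro _ _ _; exact pow_nonneg hl.le _

lemma Z_antitone (hl : 0 < lam) {S T : Finset V} (hST : S ⊆ T) (η : V → Bool) :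
    Z Gr lam T η ≤ Z Gr lam S η := by
  apply Finset.sum_le_sum_of_subset_of_nonneg
  · intro σ hσ
    simp only [mem_filter, mem_univ, true_and] at *
    exact ⟨hσ.1, fun w hw => hσ.2 w (hST hw)⟩
  · intro _ _ _; exact pow_nonneg hl.le _

lemma Z_pos_of_witness (hl : 0 < lam) {S : Finset V} {η σ : V → Bool}
    (hadm : Admissible Gr σ) (hm : ∀ w ∈ S, σ w = η w) : 0 < Z Gr lam S η := by
  apply Finset.sum_pos' (fun _ _ => pow_nonneg hl.le _)
  exact ⟨σ, by simp only [mem_filter, mem_univ, true_and]; exact ⟨hadm, hm⟩, pow_pos hl _⟩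

lemma exists_witness_of_Z_pos {S : Finset V} {η : V → Bool}
    (h : 0 < Z Gr lam S η) :
    ∃ σ : V → Bool, Admissible Gr σ ∧ ∀ w ∈ S, σ w = η w := by
  by_contra hc
  push_neg at hc
  have : Z Gr lam S η = 0 := by
    apply Finset.sum_eq_zero
    intro σ hσ
    simp only [mem_filter, mem_univ, true_and] at hσ
    exact absurd hσ.2 (fun h2 => (hc σ hσ.1).elim (fun w hw => by
      obtain ⟨w, hw, hne⟩ := (hc σ hσ.1)
      exact hne (h2 w hw)))
  linarith

lemma Z_congr {S : Finset V} {η η' : V → Bool} (h : ∀ w ∈ S, η w = η' w) :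
    Z Gr lam S η = Z Gr lam S η' := by
  unfold Z
  congr 1
  apply Finset.filter_congr
  intro σ _
  constructor
  · rintro ⟨ha, hm⟩; exact ⟨ha, fun w hw => (hm w hw).trans (h w hw)⟩
  · rintro ⟨ha, hm⟩; exact ⟨ha, fun w hw => (hm w hw).trans (h w hw).symm⟩

lemma ZV_add (v : V) (S : Finset V) (η : V → Bool) :
    ZV Gr lam v true S η + ZV Gr lam v false S η = Z Gr lam S η := by
  unfold ZV Z
  rw [← Finset.sum_filter_add_sum_filter_not
    (univ.filter (fun σ : V → Bool => Admissible Gr σ ∧ ∀ w ∈ S, σ w = η w))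
    (fun σ => σ v = true)]
  rw [Finset.filter_filter, Finset.filter_filter]
  congr 1
  · congr 1; apply Finset.filter_congr; intro σ _; tauto
  · congr 1; apply Finset.filter_congr; intro σ _
    simp only [Bool.not_eq_true]; tauto

lemma pr_nonneg (hl : 0 < lam) (v : V) (τ : Bool) (S : Finset V) (η : V → Bool) :
    0 ≤ pr Gr lam v τ S η :=
  div_nonneg (ZV_nonneg hl v τ S η) (Z_nonneg hl S η)

lemma pr_le_one (hl : 0 < lam) (v : V) (τ : Bool) (S : Finset V) (η : V → Bool)
    (hZ : 0 < Z Gr lam S η) : pr Gr lam v τ S η ≤ 1 :=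
  div_le_one_of_le₀ (ZV_le_Z hl v τ S η) hZ.le

lemma pr_false_eq (v : V) (S : Finset V) (η : V → Bool) (hZ : 0 < Z Gr lam S η) :
    pr Gr lam v false S η = 1 - pr Gr lam v true S η := by
  have h := ZV_add (Gr := Gr) (lam := lam) v S η
  unfold pr
  field_simp
  linarith

section Flip

variable {V : Type} [Fintype V] [DecidableEq V] {Gr : SimpleGraph V} [DecidableRel Gr.Adj]
  {lam : ℝ}

lemma adm_update_false {σ : V → Bool} (h : Admissible Gr σ) (x : V) :
    Admissible Gr (Function.update σ x false) := by
  intro a b hab ⟨ha, hb⟩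
  apply h a b hab
  constructor
  · by_cases hax : a = x
    · subst hax; simp at ha
    · rwa [Function.update_of_ne hax] at ha
  · by_cases hbx : b = x
    · subst hbx; simp at hb
    · rwa [Function.update_of_ne hbx] at hb

lemma adm_update_true {σ : V → Bool} (h : Admissible Gr σ) (x : V)
    (hnb : ∀ u, Gr.Adj x u → σ u = false) :
    Admissible Gr (Function.update σ x true) := by
  intro a b hab ⟨ha, hb⟩
  by_cases hax : a = x
  · by_cases hbx : b = x
    · exact Gr.loopless.irrefl x (by rwa [hax, hbx] at hab)
    · rw [Function.update_of_ne hbx] at hb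
      rw [hnb b (by rwa [hax] at hab)] at hb; exact Bool.false_ne_true hb
  · rw [Function.update_of_ne hax] at ha
    by_cases hbx : b = x
    · rw [hnb a (Gr.adj_symm (by rwa [hbx] at hab))] at ha
      exact Bool.false_ne_true ha
    · rw [Function.update_of_ne hbx] at hb
      exact h a b hab ⟨ha, hb⟩

lemma numOcc_update_false {σ : V → Bool} {x : V} (hx : σ x = true) :
    numOcc σ = numOcc (Function.update σ x false) + 1 := by
  unfold numOcc
  have hset : univ.filter (fun v => Function.update σ x false v = true)
      = (univ.filter (fun v => σ v = true)).erase x := by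
    ext w
    simp only [mem_filter, mem_univ, true_and, mem_erase]
    by_cases hw : w = x
    · subst hw; simp
    · rw [Function.update_of_ne hw]; simp [hw]
  rw [hset, Finset.card_erase_of_mem (by simp [hx])]
  have : 1 ≤ (univ.filter (fun v => σ v = true)).card :=
    Finset.card_pos.mpr ⟨x, by simp [hx]⟩
  omega

/-- The flip identity: summing over configurations with `v` occupied equals `lam`
times the sum over configurations with `v` and all its free neighbours empty. -/
lemma ZV_true_flip (hl : 0 < lam) {v : V} {S : Finset V} {η : V → Bool}
    (hv : v ∉ S) (hub : ∀ u, Gr.Adj v u → u ∈ S → η u = false) :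
    ZV Gr lam v true S η
      = lam * Z Gr lam (insert v (S ∪ (Gr.neighborFinset v \ S)))
          (fun w => if w ∈ insert v (Gr.neighborFinset v \ S) then false else η w) := by
  classical
  set N' := Gr.neighborFinset v \ S with hN'
  set M := insert v N' with hM
  set ζ : V → Bool := fun w => if w ∈ M then false else η w with hζ
  set T := insert v (S ∪ N') with hT
  have hζv : ζ v = false := by simp [hζ, hM]
  have hζS : ∀ w ∈ S, ζ w = η w := by
    intro w hw
    have hwv : w ≠ v := fun h => hv (h ▸ hw)
    have hwN : w ∉ N' := by simp [hN', hw]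
    simp [hζ, hM, hwv, hwN]
  have hζN : ∀ w ∈ N', ζ w = false := by
    intro w hw; simp [hζ, hM, hw]
  unfold ZV Z
  have key : ∑ σ ∈ univ.filter
      (fun σ : V → Bool => Admissible Gr σ ∧ (∀ w ∈ S, σ w = η w) ∧ σ v = true),
        lam ^ numOcc σ
      = ∑ σ ∈ univ.filter
      (fun σ : V → Bool => Admissible Gr σ ∧ ∀ w ∈ T, σ w = ζ w),
        lam * lam ^ numOcc σ := by
    apply Finset.sum_nbij' (i := fun σ => Function.update σ v false)
      (j := fun σ => Function.update σ v true)
    · intro σ hσ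
      simp only [mem_filter, mem_univ, true_and] at hσ ⊢
      obtain ⟨ha, hm, hvt⟩ := hσ
      refine ⟨adm_update_false ha v, ?_⟩
      intro w hw
      rw [hT, Finset.mem_insert] at hw
      rcases hw with rfl | hw
      · simp [hζv]
      · rw [Finset.mem_union] at hw
        rcases hw with hw | hw
        · have hwv : w ≠ v := fun h => hv (h ▸ hw)
          rw [Function.update_of_ne hwv, hζS w hw]
          exact hm w hw
        · have hadj : Gr.Adj v w := by
            rw [hN', Finset.mem_sdiff] at hw
            exact (SimpleGraph.mem_neighborFinset _ _ _).1 hw.1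
          have hwv : w ≠ v := fun h => Gr.loopless.irrefl v (h ▸ hadj)
          rw [Function.update_of_ne hwv, hζN w hw]
          by_contra hc
          have : σ w = true := by
            cases h : σ w
            · exact absurd h hc
            · rfl
          exact ha v w hadj ⟨hvt, this⟩
    · intro σ hσ
      simp only [mem_filter, mem_univ, true_and] at hσ ⊢
      obtain ⟨ha, hm⟩ := hσ
      have hnb : ∀ u, Gr.Adj v u → σ u = false := by
        intro u hadj
        by_cases hu : u ∈ S
        · rw [hm u (by rw [hT]; simp [hu]), hζS u hu]
          exact hub u hadj hu
        · have huN : u ∈ N' := by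
            rw [hN', Finset.mem_sdiff]
            exact ⟨(SimpleGraph.mem_neighborFinset _ _ _).2 hadj, hu⟩
          rw [hm u (by rw [hT]; simp [Finset.mem_union, huN]), hζN u huN]
      refine ⟨adm_update_true ha v hnb, ?_, by simp⟩
      intro w hw
      have hwv : w ≠ v := fun h => hv (h ▸ hw)
      rw [Function.update_of_ne hwv, hm w (by rw [hT]; simp [Finset.mem_union, hw]),
        hζS w hw]
    · intro σ hσ
      simp only [mem_filter, mem_univ, true_and] at hσ
      funext w
      by_cases hw : w = v
      · rw [hw]; simp [hσ.2.2]
      · simp [Function.update_of_ne hw]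
    · intro σ hσ
      simp only [mem_filter, mem_univ, true_and] at hσ
      funext w
      by_cases hw : w = v
      · have hσv : σ v = false := by
          rw [hσ.2 v (by rw [hT]; simp), hζv]
        rw [hw]; simp [hσv]
      · simp [Function.update_of_ne hw]
    · intro σ hσ
      simp only [mem_filter, mem_univ, true_and] at hσ
      rw [numOcc_update_false hσ.2.2, pow_succ]
      ring
  rw [key, Finset.mul_sum]

lemma ZV_false_eq (hl : 0 < lam) {v : V} {S : Finset V} {η : V → Bool} (hv : v ∉ S) :
    ZV Gr lam v false S η
      = Z Gr lam (insert v S)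
          (fun w => if w ∈ insert v (Gr.neighborFinset v \ S) then false else η w) := by
  classical
  unfold ZV Z
  congr 1
  apply Finset.filter_congr
  intro σ _
  constructor
  · rintro ⟨ha, hm, hvf⟩
    refine ⟨ha, ?_⟩
    intro w hw
    rcases Finset.mem_insert.1 hw with rfl | hw
    · simp [hvf]
    · have hwv : w ≠ v := fun h => hv (h ▸ hw)
      have hwN : w ∉ Gr.neighborFinset v \ S := by simp [hw]
      simp only [Finset.mem_insert, hwv, hwN, or_self, if_false]
      exact hm w hw
  · rintro ⟨ha, hm⟩
    refine ⟨ha, ?_, ?_⟩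
    · intro w hw
      have hwv : w ≠ v := fun h => hv (h ▸ hw)
      have hwN : w ∉ Gr.neighborFinset v \ S := by simp [hw]
      have := hm w (Finset.mem_insert_of_mem hw)
      simpa [Finset.mem_insert, hwv, hwN] using this
    · have := hm v (Finset.mem_insert_self v S)
      simpa using this

/-- Pin a vertex whose ζ-value is `false`. -/
lemma Z_insert_eq_ZV_false {u : V} {T : Finset V} {ζ : V → Bool} (hu : ζ u = false) :
    Z Gr lam (insert u T) ζ = ZV Gr lam u false T ζ := by
  unfold Z ZV
  congr 1
  apply Finset.filter_congr
  intro σ _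
  constructor
  · rintro ⟨ha, hm⟩
    exact ⟨ha, fun w hw => hm w (Finset.mem_insert_of_mem hw),
      by rw [hm u (Finset.mem_insert_self u T), hu]⟩
  · rintro ⟨ha, hm, huf⟩
    refine ⟨ha, ?_⟩
    intro w hw
    rcases Finset.mem_insert.1 hw with rfl | hw
    · rw [huf, hu]
    · exact hm w hw

lemma pr_true_le_lam (hl : 0 < lam) {v : V} {S : Finset V} {η : V → Bool}
    (hv : v ∉ S) (hZ : 0 < Z Gr lam S η) : pr Gr lam v true S η ≤ lam := by
  classical
  have hnum : ZV Gr lam v true S η ≤ lam * Z Gr lam S η := by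
    have step1 : ZV Gr lam v true S η
        = ∑ σ ∈ univ.filter
            (fun σ : V → Bool => Admissible Gr σ ∧ (∀ w ∈ S, σ w = η w) ∧ σ v = true),
          lam * lam ^ numOcc (Function.update σ v false) := by
      unfold ZV
      apply Finset.sum_congr rfl
      intro σ hσ
      simp only [mem_filter, mem_univ, true_and] at hσ
      rw [numOcc_update_false hσ.2.2, pow_succ]; ring
    rw [step1, ← Finset.mul_sum]
    apply mul_le_mul_of_nonneg_left _ hl.le
    have hinj : ∀ σ ∈ univ.filter
        (fun σ : V → Bool => Admissible Gr σ ∧ (∀ w ∈ S, σ w = η w) ∧ σ v = true),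
        ∀ σ' ∈ univ.filter
        (fun σ : V → Bool => Admissible Gr σ ∧ (∀ w ∈ S, σ w = η w) ∧ σ v = true),
        Function.update σ v false = Function.update σ' v false → σ = σ' := by
      intro σ hσ σ' hσ' heq
      simp only [mem_filter, mem_univ, true_and] at hσ hσ'
      funext w
      by_cases hw : w = v
      · rw [hw, hσ.2.2, hσ'.2.2]
      · have := congrFun heq w
        rwa [Function.update_of_ne hw, Function.update_of_ne hw] at this
    have himg : (∑ σ ∈ (univ.filter
        (fun σ : V → Bool => Admissible Gr σ ∧ (∀ w ∈ S, σ w = η w) ∧ σ v = true)).image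
          (fun σ => Function.update σ v false), lam ^ numOcc σ)
        = ∑ σ ∈ univ.filter
        (fun σ : V → Bool => Admissible Gr σ ∧ (∀ w ∈ S, σ w = η w) ∧ σ v = true),
          lam ^ numOcc (Function.update σ v false) := Finset.sum_image hinj
    rw [← himg]
    apply Finset.sum_le_sum_of_subset_of_nonneg
    · intro σ hσ
      simp only [Finset.mem_image, mem_filter, mem_univ, true_and] at hσ ⊢
      obtain ⟨σ', ⟨ha, hm, _⟩, rfl⟩ := hσ
      refine ⟨adm_update_false ha v, ?_⟩
      intro w hw
      have hwv : w ≠ v := fun h => hv (h ▸ hw)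
      rw [Function.update_of_ne hwv]; exact hm w hw
    · intro _ _ _; exact pow_nonneg hl.le _
  unfold pr
  rw [div_le_iff₀ hZ]
  linarith

end Flip

section Key

variable {V : Type} [Fintype V] [DecidableEq V] {Gr : SimpleGraph V} [DecidableRel Gr.Adj]
  {lam : ℝ}

lemma adm_zeroOn {σ : V → Bool} (h : Admissible Gr σ) (M : Finset V) :
    Admissible Gr (fun w => if w ∈ M then false else σ w) := by
  intro a b hab ⟨ha, hb⟩
  simp only [] at ha hb
  by_cases haM : a ∈ M
  · rw [if_pos haM] at ha; exact Bool.false_ne_true ha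
  · by_cases hbM : b ∈ M
    · rw [if_pos hbM] at hb; exact Bool.false_ne_true hb
    · rw [if_neg haM] at ha; rw [if_neg hbM] at hb
      exact h a b hab ⟨ha, hb⟩

lemma lipschitz_aux (hl : 0 < lam) {x y : ℝ} (hx : 0 ≤ x) (hy : 0 ≤ y) :
    |lam * x / (1 + lam * x) - lam * y / (1 + lam * y)| ≤ lam * |x - y| := by
  have h1 : (0:ℝ) < 1 + lam * x := by positivity
  have h2 : (0:ℝ) < 1 + lam * y := by positivity
  rw [div_sub_div _ _ (ne_of_gt h1) (ne_of_gt h2), abs_div]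
  have hnum : lam * x * (1 + lam * y) - (1 + lam * x) * (lam * y) = lam * (x - y) := by
    ring
  rw [hnum, abs_of_pos (mul_pos h1 h2), abs_mul, abs_of_pos hl]
  have hone : 1 ≤ (1 + lam * x) * (1 + lam * y) := by
    nlinarith [mul_nonneg (mul_nonneg hl.le hx) (mul_nonneg hl.le hy),
      mul_nonneg hl.le hx, mul_nonneg hl.le hy]
  calc lam * |x - y| / ((1 + lam * x) * (1 + lam * y)) ≤ lam * |x - y| :=
        div_le_self (by positivity) hone

lemma pr_of_mem (hl : 0 < lam) {v : V} {S : Finset V} {η : V → Bool}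
    (hvS : v ∈ S) (hZ : 0 < Z Gr lam S η) :
    pr Gr lam v true S η = if η v = true then 1 else 0 := by
  by_cases hv : η v = true
  · rw [if_pos hv]
    unfold pr
    have : ZV Gr lam v true S η = Z Gr lam S η := by
      unfold ZV Z
      congr 1
      apply Finset.filter_congr
      intro σ _
      constructor
      · rintro ⟨ha, hm, _⟩; exact ⟨ha, hm⟩
      · rintro ⟨ha, hm⟩; exact ⟨ha, hm, by rw [hm v hvS, hv]⟩
    rw [this, div_self (ne_of_gt hZ)]
  · rw [if_neg hv]
    unfold pr
    have : ZV Gr lam v true S η = 0 := by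
      apply Finset.sum_eq_zero
      intro σ hσ
      simp only [mem_filter, mem_univ, true_and] at hσ
      exact absurd (hσ.2.1 v hvS ▸ hσ.2.2) hv
    rw [this, zero_div]

lemma pr_of_blocked (hl : 0 < lam) {v : V} {S : Finset V} {η : V → Bool}
    (hbl : ∃ u, Gr.Adj v u ∧ u ∈ S ∧ η u = true) :
    pr Gr lam v true S η = 0 := by
  obtain ⟨u, hadj, huS, hηu⟩ := hbl
  unfold pr
  have : ZV Gr lam v true S η = 0 := by
    apply Finset.sum_eq_zero
    intro σ hσ
    simp only [mem_filter, mem_univ, true_and] at hσ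
    exact (hσ.1 v u hadj ⟨hσ.2.2, (hσ.2.1 u huS).trans hηu⟩).elim
  rw [this, zero_div]

theorem key (hl : 0 < lam) (Δ : ℕ) (hΔ : Gr.maxDegree ≤ Δ) :
    ∀ d : ℕ, ∀ (v : V) (S : Finset V) (η η' : V → Bool),
      0 < Z Gr lam S η → 0 < Z Gr lam S η' →
      (∀ w ∈ S, η w ≠ η' w → ∀ p : Gr.Walk v w, d ≤ p.length) →
      |pr Gr lam v true S η - pr Gr lam v true S η'| ≤ (lam * (Δ + 1)) ^ d := by
  intro d
  induction d with
  | zero =>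
    intro v S η η' hZ hZ' _
    simp only [pow_zero]
    have h1 := pr_nonneg (Gr := Gr) hl v true S η
    have h2 := pr_nonneg (Gr := Gr) hl v true S η'
    have h3 := pr_le_one hl v true S η hZ
    have h4 := pr_le_one hl v true S η' hZ'
    rw [abs_le]; constructor <;> linarith
  | succ d IH =>
    intro v S η η' hZ hZ' hdist
    have hK0 : (0:ℝ) ≤ lam * (Δ + 1) := by positivity
    by_cases hvS : v ∈ S
    · have hvv : η v = η' v := by
        by_contra hne
        have := hdist v hvS hne SimpleGraph.Walk.nil
        simp at this
      rw [pr_of_mem hl hvS hZ, pr_of_mem hl hvS hZ', hvv, sub_self, abs_zero]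
      positivity
    · by_cases hb : ∃ u, Gr.Adj v u ∧ u ∈ S ∧ η u = true
      · by_cases hb' : ∃ u, Gr.Adj v u ∧ u ∈ S ∧ η' u = true
        · rw [pr_of_blocked hl hb, pr_of_blocked hl hb', sub_self, abs_zero]
          positivity
        · -- η blocked, η' not: disagreement at distance 1, so d = 0
          obtain ⟨u, hadj, huS, hηu⟩ := hb
          push_neg at hb'
          have hη'u : η' u = false := by
            have := hb' u hadj huS
            cases h : η' u
            · rfl
            · exact absurd h this
          have hd0 : d = 0 := by
            have h1 := hdist u huS (by rw [hηu, hη'u]; simp)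
              (SimpleGraph.Walk.cons hadj SimpleGraph.Walk.nil)
            simp at h1
            omega
          subst hd0
          rw [pr_of_blocked hl ⟨u, hadj, huS, hηu⟩, zero_sub, abs_neg,
            abs_of_nonneg (pr_nonneg (Gr := Gr) hl v true S η')]
          have := pr_true_le_lam hl hvS hZ'
          have hle : lam ≤ lam * (Δ + 1) := by nlinarith
          calc pr Gr lam v true S η' ≤ lam := this
            _ ≤ lam * (Δ + 1) := hle
            _ = (lam * (Δ + 1)) ^ 1 := (pow_one _).symm
      · by_cases hb' : ∃ u, Gr.Adj v u ∧ u ∈ S ∧ η' u = true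
        · obtain ⟨u, hadj, huS, hηu⟩ := hb'
          push_neg at hb
          have hηu2 : η u = false := by
            have := hb u hadj huS
            cases h : η u
            · rfl
            · exact absurd h this
          have hd0 : d = 0 := by
            have h1 := hdist u huS (by rw [hηu, hηu2]; simp)
              (SimpleGraph.Walk.cons hadj SimpleGraph.Walk.nil)
            simp at h1
            omega
          subst hd0
          rw [pr_of_blocked hl ⟨u, hadj, huS, hηu⟩, sub_zero,
            abs_of_nonneg (pr_nonneg (Gr := Gr) hl v true S η)]
          have := pr_true_le_lam hl hvS hZ
          have hle : lam ≤ lam * (Δ + 1) := by nlinarith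
          calc pr Gr lam v true S η ≤ lam := this
            _ ≤ lam * (Δ + 1) := hle
            _ = (lam * (Δ + 1)) ^ 1 := (pow_one _).symm
        · -- main case: neither side blocked
          push_neg at hb hb'
          have hub : ∀ u, Gr.Adj v u → u ∈ S → η u = false := by
            intro u h1 h2
            have := hb u h1 h2
            cases h : η u
            · rfl
            · exact absurd h this
          have hub' : ∀ u, Gr.Adj v u → u ∈ S → η' u = false := by
            intro u h1 h2
            have := hb' u h1 h2
            cases h : η' u
            · rfl
            · exact absurd h this
          set N' : Finset V := Gr.neighborFinset v \ S with hN'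
          set ζ : V → Bool := fun w => if w ∈ insert v N' then false else η w with hζ
          set ζ' : V → Bool := fun w => if w ∈ insert v N' then false else η' w with hζ'
          set A := Z Gr lam (insert v S) ζ with hA
          set B := Z Gr lam (insert v (S ∪ N')) ζ with hB
          set A' := Z Gr lam (insert v S) ζ' with hA'
          set B' := Z Gr lam (insert v (S ∪ N')) ζ' with hB'
          -- positivity of B (hence A)
          have hBpos : 0 < B := by
            obtain ⟨σ₀, hadm₀, hm₀⟩ := exists_witness_of_Z_pos hZ
            apply Z_pos_of_witness hl (σ := fun w => if w ∈ insert v N' then false else σ₀ w)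
              (adm_zeroOn hadm₀ _)
            intro w hw
            simp only [hζ]
            by_cases hwM : w ∈ insert v N'
            · simp only [if_pos hwM]
            · have hwS : w ∈ S := by
                rcases Finset.mem_insert.1 hw with rfl | hw2
                · exact absurd (Finset.mem_insert_self _ _) hwM
                · rcases Finset.mem_union.1 hw2 with h | h
                  · exact h
                  · exact absurd (Finset.mem_insert_of_mem h) hwM
              simp only [if_neg hwM]
              exact hm₀ w hwS
          have hB'pos : 0 < B' := by
            obtain ⟨σ₀, hadm₀, hm₀⟩ := exists_witness_of_Z_pos hZ'
            apply Z_pos_of_witness hl (σ := fun w => if w ∈ insert v N' then false else σ₀ w)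
              (adm_zeroOn hadm₀ _)
            intro w hw
            simp only [hζ']
            by_cases hwM : w ∈ insert v N'
            · simp only [if_pos hwM]
            · have hwS : w ∈ S := by
                rcases Finset.mem_insert.1 hw with rfl | hw2
                · exact absurd (Finset.mem_insert_self _ _) hwM
                · rcases Finset.mem_union.1 hw2 with h | h
                  · exact h
                  · exact absurd (Finset.mem_insert_of_mem h) hwM
              simp only [if_neg hwM]
              exact hm₀ w hwS
          have hsub : insert v S ⊆ insert v (S ∪ N') :=
            Finset.insert_subset_insert _ Finset.subset_union_left
          have hApos : 0 < A := lt_of_lt_of_le hBpos (Z_antitone hl hsub ζ)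
          have hA'pos : 0 < A' := lt_of_lt_of_le hB'pos (Z_antitone hl hsub ζ')
          have hBA : B ≤ A := Z_antitone hl hsub ζ
          have hB'A' : B' ≤ A' := Z_antitone hl hsub ζ'
          -- formula for pr
          have hZVt : ZV Gr lam v true S η = lam * B := ZV_true_flip hl hvS hub
          have hZVt' : ZV Gr lam v true S η' = lam * B' := ZV_true_flip hl hvS hub'
          have hZVf : ZV Gr lam v false S η = A := (ZV_false_eq hl hvS).trans rfl
          have hZVf' : ZV Gr lam v false S η' = A' := (ZV_false_eq hl hvS).trans rfl
          have hZeq : Z Gr lam S η = lam * B + A := by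
            rw [← ZV_add v S η, hZVt, hZVf]
          have hZeq' : Z Gr lam S η' = lam * B' + A' := by
            rw [← ZV_add v S η', hZVt', hZVf']
          have hprη : pr Gr lam v true S η
              = lam * (B / A) / (1 + lam * (B / A)) := by
            unfold pr
            rw [hZVt, hZeq]
            field_simp
            ring
          have hprη' : pr Gr lam v true S η'
              = lam * (B' / A') / (1 + lam * (B' / A')) := by
            unfold pr
            rw [hZVt', hZeq']
            field_simp
            ring
          -- telescoping
          have haux : ∀ (L : List V) (T : Finset V), L.Nodup → (∀ u ∈ L, u ∉ T) →
              (∀ u ∈ L, Gr.Adj v u) →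
              (∀ u ∈ L, ζ u = false ∧ ζ' u = false) →
              0 < Z Gr lam (T ∪ L.toFinset) ζ → 0 < Z Gr lam (T ∪ L.toFinset) ζ' →
              (∀ w ∈ T ∪ L.toFinset, ζ w ≠ ζ' w →
                ∀ p : Gr.Walk v w, d + 1 ≤ p.length) →
              |Z Gr lam (T ∪ L.toFinset) ζ / Z Gr lam T ζ
                - Z Gr lam (T ∪ L.toFinset) ζ' / Z Gr lam T ζ'|
                ≤ (L.length : ℝ) * (lam * (Δ + 1)) ^ d := by
            intro L
            induction L with
            | nil =>
              intro T _ _ _ _ hp hp' _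
              simp only [List.toFinset_nil, Finset.union_empty] at hp hp' ⊢
              rw [div_self (ne_of_gt hp), div_self (ne_of_gt hp'), sub_self, abs_zero]
              simp
            | cons u L ihL =>
              intro T hnd hnT hadjL hzf hp hp' hdw
              have hset : T ∪ (u :: L).toFinset = (insert u T) ∪ L.toFinset := by
                rw [List.toFinset_cons, Finset.union_insert, Finset.insert_union]
              rw [hset] at hp hp' hdw ⊢
              have hTsub : T ⊆ (insert u T) ∪ L.toFinset :=
                (Finset.subset_insert _ _).trans Finset.subset_union_left
              have hT2sub : insert u T ⊆ (insert u T) ∪ L.toFinset :=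
                Finset.subset_union_left
              have hZT : 0 < Z Gr lam T ζ := lt_of_lt_of_le hp (Z_antitone hl hTsub ζ)
              have hZT' : 0 < Z Gr lam T ζ' := lt_of_lt_of_le hp' (Z_antitone hl hTsub ζ')
              have hZuT : 0 < Z Gr lam (insert u T) ζ :=
                lt_of_lt_of_le hp (Z_antitone hl hT2sub ζ)
              have hZuT' : 0 < Z Gr lam (insert u T) ζ' :=
                lt_of_lt_of_le hp' (Z_antitone hl hT2sub ζ')
              set a := Z Gr lam ((insert u T) ∪ L.toFinset) ζ / Z Gr lam (insert u T) ζ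
                with ha
              set b := Z Gr lam (insert u T) ζ / Z Gr lam T ζ with hbdef
              set a' := Z Gr lam ((insert u T) ∪ L.toFinset) ζ' / Z Gr lam (insert u T) ζ'
                with ha'
              set b' := Z Gr lam (insert u T) ζ' / Z Gr lam T ζ' with hb'def
              have hfact : Z Gr lam ((insert u T) ∪ L.toFinset) ζ / Z Gr lam T ζ = a * b := by
                rw [ha, hbdef, div_mul_div_comm,
                  mul_comm (Z Gr lam ((insert u T) ∪ L.toFinset) ζ) (Z Gr lam (insert u T) ζ),
                  mul_div_mul_left _ _ (ne_of_gt hZuT)]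
              have hfact' : Z Gr lam ((insert u T) ∪ L.toFinset) ζ' / Z Gr lam T ζ' = a' * b' := by
                rw [ha', hb'def, div_mul_div_comm,
                  mul_comm (Z Gr lam ((insert u T) ∪ L.toFinset) ζ') (Z Gr lam (insert u T) ζ'),
                  mul_div_mul_left _ _ (ne_of_gt hZuT')]
              -- bounds
              have ha01 : 0 ≤ a ∧ a ≤ 1 := by
                constructor
                · apply div_nonneg (Z_nonneg hl _ _) (Z_nonneg hl _ _)
                · exact div_le_one_of_le₀ (Z_antitone hl hT2sub ζ) (Z_nonneg hl _ _)
              have hb01 : 0 ≤ b ∧ b ≤ 1 := by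
                constructor
                · apply div_nonneg (Z_nonneg hl _ _) (Z_nonneg hl _ _)
                · exact div_le_one_of_le₀
                    (Z_antitone hl (Finset.subset_insert _ _) ζ) (Z_nonneg hl _ _)
              have ha'01 : 0 ≤ a' ∧ a' ≤ 1 := by
                constructor
                · apply div_nonneg (Z_nonneg hl _ _) (Z_nonneg hl _ _)
                · exact div_le_one_of_le₀ (Z_antitone hl hT2sub ζ') (Z_nonneg hl _ _)
              have hb'01 : 0 ≤ b' ∧ b' ≤ 1 := by
                constructor
                · apply div_nonneg (Z_nonneg hl _ _) (Z_nonneg hl _ _)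
                · exact div_le_one_of_le₀
                    (Z_antitone hl (Finset.subset_insert _ _) ζ') (Z_nonneg hl _ _)
              -- single-vertex bound via outer IH
              have hbb' : |b - b'| ≤ (lam * (Δ + 1)) ^ d := by
                have hadju : Gr.Adj v u := hadjL u List.mem_cons_self
                have hζu : ζ u = false := (hzf u List.mem_cons_self).1
                have hζ'u : ζ' u = false := (hzf u List.mem_cons_self).2
                have hbp : b = pr Gr lam u false T ζ := by
                  rw [hbdef, pr, ← Z_insert_eq_ZV_false hζu]
                have hb'p : b' = pr Gr lam u false T ζ' := by
                  rw [hb'def, pr, ← Z_insert_eq_ZV_false hζ'u]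
                rw [hbp, hb'p, pr_false_eq u T ζ hZT, pr_false_eq u T ζ' hZT']
                have : (1 - pr Gr lam u true T ζ) - (1 - pr Gr lam u true T ζ')
                    = -(pr Gr lam u true T ζ - pr Gr lam u true T ζ') := by ring
                rw [this, abs_neg]
                apply IH u T ζ ζ' hZT hZT'
                intro w hw hne p
                have hlen := hdw w (hTsub hw) hne (SimpleGraph.Walk.cons hadju p)
                rw [SimpleGraph.Walk.length_cons] at hlen
                omega
              have haa' : |a - a'| ≤ (L.length : ℝ) * (lam * (Δ + 1)) ^ d := by
                apply ihL (insert u T) (List.nodup_cons.1 hnd).2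
                · intro x hx
                  rw [Finset.mem_insert]
                  push_neg
                  constructor
                  · intro hxu
                    exact (List.nodup_cons.1 hnd).1 (hxu ▸ hx)
                  · exact hnT x (List.mem_cons_of_mem u hx)
                · intro x hx; exact hadjL x (List.mem_cons_of_mem u hx)
                · intro x hx; exact hzf x (List.mem_cons_of_mem u hx)
                · exact hp
                · exact hp'
                · exact hdw
              -- combine
              rw [hfact, hfact']
              have hcomb : |a * b - a' * b'| ≤ |a| * |b - b'| + |b'| * |a - a'| := by
                have : a * b - a' * b' = a * (b - b') + b' * (a - a') := by ring
                rw [this]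
                calc |a * (b - b') + b' * (a - a')|
                    ≤ |a * (b - b')| + |b' * (a - a')| := abs_add_le _ _
                  _ = |a| * |b - b'| + |b'| * |a - a'| := by rw [abs_mul, abs_mul]
              have hAa : |a| ≤ 1 := by rw [abs_of_nonneg ha01.1]; exact ha01.2
              have hBb : |b'| ≤ 1 := by rw [abs_of_nonneg hb'01.1]; exact hb'01.2
              have hKd : (0:ℝ) ≤ (lam * (Δ + 1)) ^ d := by positivity
              calc |a * b - a' * b'| ≤ |a| * |b - b'| + |b'| * |a - a'| := hcomb
                _ ≤ 1 * (lam * (Δ + 1)) ^ d + 1 * ((L.length : ℝ) * (lam * (Δ + 1)) ^ d) := by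
                    apply add_le_add
                    · apply mul_le_mul hAa hbb' (abs_nonneg _) zero_le_one
                    · apply mul_le_mul hBb haa' (abs_nonneg _) zero_le_one
                _ = ((u :: L).length : ℝ) * (lam * (Δ + 1)) ^ d := by
                    simp [List.length_cons]
                    push_cast
                    ring
          -- apply telescoping to N'
          have hfin : |B / A - B' / A'| ≤ (Δ : ℝ) * (lam * (Δ + 1)) ^ d := by
            have hsets : (insert v S) ∪ N'.toList.toFinset = insert v (S ∪ N') := by
              rw [Finset.toList_toFinset, Finset.insert_union]
            have happ := haux N'.toList (insert v S) (Finset.nodup_toList N')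
              (by
                intro u hu
                rw [Finset.mem_toList] at hu
                rw [hN', Finset.mem_sdiff] at hu
                have hadj : Gr.Adj v u := (SimpleGraph.mem_neighborFinset _ _ _).1 hu.1
                rw [Finset.mem_insert]
                push_neg
                exact ⟨fun h => Gr.loopless.irrefl v (h ▸ hadj), hu.2⟩)
              (by
                intro u hu
                rw [Finset.mem_toList] at hu
                rw [hN', Finset.mem_sdiff] at hu
                exact (SimpleGraph.mem_neighborFinset _ _ _).1 hu.1)
              (by
                intro u hu
                rw [Finset.mem_toList] at hu
                constructor
                · simp only [hζ]; rw [if_pos (Finset.mem_insert_of_mem hu)]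
                · simp only [hζ']; rw [if_pos (Finset.mem_insert_of_mem hu)])
              (by rw [hsets]; exact hBpos)
              (by rw [hsets]; exact hB'pos)
              (by
                rw [hsets]
                intro w hw hne p
                have hwM : w ∉ insert v N' := by
                  intro hwM
                  apply hne
                  simp only [hζ, hζ']
                  rw [if_pos hwM, if_pos hwM]
                have hwS : w ∈ S := by
                  rcases Finset.mem_insert.1 hw with rfl | hw2
                  · exact absurd (Finset.mem_insert_self _ _) hwM
                  · rcases Finset.mem_union.1 hw2 with h | h
                    · exact h
                    · exact absurd (Finset.mem_insert_of_mem h) hwM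
                have hηw : η w ≠ η' w := by
                  intro hww
                  apply hne
                  simp only [hζ, hζ', if_neg hwM]
                  exact hww
                exact hdist w hwS hηw p)
            rw [hsets] at happ
            have hcard : (N'.toList.length : ℝ) ≤ (Δ : ℝ) := by
              rw [Finset.length_toList]
              have h1 : N'.card ≤ Gr.degree v := by
                rw [← SimpleGraph.card_neighborFinset_eq_degree]
                exact Finset.card_le_card (Finset.sdiff_subset)
              have h2 := Gr.degree_le_maxDegree v
              exact_mod_cast le_trans h1 (le_trans h2 hΔ)
            calc |B / A - B' / A'| ≤ (N'.toList.length : ℝ) * (lam * (Δ + 1)) ^ d := happ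
              _ ≤ (Δ : ℝ) * (lam * (Δ + 1)) ^ d := by
                  apply mul_le_mul_of_nonneg_right hcard (by positivity)
          -- finish
          rw [hprη, hprη']
          have hlip := lipschitz_aux hl (x := B / A) (y := B' / A')
            (div_nonneg (Z_nonneg hl _ _) (Z_nonneg hl _ _))
            (div_nonneg (Z_nonneg hl _ _) (Z_nonneg hl _ _))
          calc |lam * (B / A) / (1 + lam * (B / A)) - lam * (B' / A') / (1 + lam * (B' / A'))|
              ≤ lam * |B / A - B' / A'| := hlip
            _ ≤ lam * ((Δ : ℝ) * (lam * (Δ + 1)) ^ d) :=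
                mul_le_mul_of_nonneg_left hfin hl.le
            _ ≤ (lam * (Δ + 1)) ^ (d + 1) := by
                rw [pow_succ]
                have : lam * ((Δ : ℝ) * (lam * (Δ + 1)) ^ d)
                    = (lam * (Δ : ℝ)) * (lam * (Δ + 1)) ^ d := by ring
                rw [this, mul_comm ((lam * (Δ + 1)) ^ d) (lam * (Δ + 1))]
                apply mul_le_mul_of_nonneg_right _ (by positivity)
                nlinarith

end Key

section Bridge

variable {V : Type} [Fintype V] [DecidableEq V] {Gr : SimpleGraph V} [DecidableRel Gr.Adj]
  {lam : ℝ}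

lemma hcProb_eq (σ : V → Bool) :
    hcProb Gr lam σ = (if Admissible Gr σ then lam ^ numOcc σ else 0) / partition Gr lam := by
  unfold hcProb
  split
  · rfl
  · rw [zero_div]

lemma partition_pos (hl : 0 < lam) : 0 < partition Gr lam := by
  unfold partition
  apply Finset.sum_pos'
  · intro σ _
    split
    · exact pow_nonneg hl.le _
    · exact le_refl 0
  · refine ⟨(fun _ => false), Finset.mem_univ _, ?_⟩
    have hadm : Admissible Gr (fun _ => false) := by
      intro a b _ ⟨ha, _⟩
      exact Bool.false_ne_true ha
    rw [if_pos hadm]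
    have : numOcc (fun _ : V => false) = 0 := by
      unfold numOcc
      rw [Finset.card_eq_zero]
      apply Finset.filter_false_of_mem
      intro x _
      exact Bool.false_ne_true
    rw [this, pow_zero]
    exact one_pos

lemma hcProb_nonneg (hl : 0 < lam) (σ : V → Bool) : 0 ≤ hcProb Gr lam σ := by
  rw [hcProb_eq]
  apply div_nonneg _ (partition_pos hl).le
  split
  · exact pow_nonneg hl.le _
  · exact le_refl 0

lemma sum_hcProb (hl : 0 < lam) : ∑ σ : V → Bool, hcProb Gr lam σ = 1 := by
  have : ∑ σ : V → Bool, hcProb Gr lam σ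
      = (∑ σ : V → Bool, if Admissible Gr σ then lam ^ numOcc σ else 0) / partition Gr lam := by
    rw [Finset.sum_div]
    exact Finset.sum_congr rfl fun σ _ => hcProb_eq σ
  rw [this]
  exact div_self (ne_of_gt (partition_pos hl))

lemma sum_hc_filter (P : (V → Bool) → Prop) [DecidablePred P] :
    ∑ σ ∈ univ.filter P, hcProb Gr lam σ
      = (∑ σ ∈ univ.filter (fun σ => Admissible Gr σ ∧ P σ), lam ^ numOcc σ)
          / partition Gr lam := by
  have h1 : ∑ σ ∈ univ.filter P, hcProb Gr lam σ
      = (∑ σ ∈ univ.filter P, if Admissible Gr σ then lam ^ numOcc σ else 0)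
          / partition Gr lam := by
    rw [Finset.sum_div]
    exact Finset.sum_congr rfl fun σ _ => hcProb_eq σ
  rw [h1]
  congr 1
  rw [← Finset.sum_filter, Finset.filter_filter]
  congr 1
  apply Finset.filter_congr
  intro σ _
  exact and_comm

end Bridge

section Measure

variable {V : Type} [Fintype V] [DecidableEq V] {Gr : SimpleGraph V} [DecidableRel Gr.Adj]
  {lam : ℝ} {Ω : Type} [MeasureSpace Ω] [IsProbabilityMeasure (ℙ : Measure Ω)]
  {Θ : Ω → V → Bool}

lemma law (hl : 0 < lam)
    (hΘ : ∀ η₀ : V → Bool, ℙ {ω | Θ ω = η₀} = ENNReal.ofReal (hcProb Gr lam η₀))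
    (P : (V → Bool) → Prop) [DecidablePred P] :
    ℙ {ω | P (Θ ω)} = ∑ σ ∈ univ.filter P, ENNReal.ofReal (hcProb Gr lam σ) := by
  have hsub : ∀ (Q : (V → Bool) → Prop) (_ : DecidablePred Q),
      ℙ {ω | Q (Θ ω)} ≤ ∑ σ ∈ univ.filter Q, ENNReal.ofReal (hcProb Gr lam σ) := by
    intro Q hQ
    have hset : {ω | Q (Θ ω)} = ⋃ σ ∈ univ.filter Q, {ω | Θ ω = σ} := by
      ext ω
      simp only [Set.mem_setOf_eq, Set.mem_iUnion, mem_filter, mem_univ, true_and]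
      constructor
      · intro h; exact ⟨Θ ω, h, rfl⟩
      · rintro ⟨σ, hσ, heq⟩; rw [heq]; exact hσ
    rw [hset]
    refine le_trans (measure_biUnion_finset_le _ _) ?_
    apply Finset.sum_le_sum
    intro σ _
    rw [hΘ σ]
  have hfin : ∀ (Q : (V → Bool) → Prop) (_ : DecidablePred Q),
      (∑ σ ∈ univ.filter Q, ENNReal.ofReal (hcProb Gr lam σ)) ≠ ⊤ := by
    intro Q hQ
    apply ne_of_lt
    apply ENNReal.sum_lt_top.2
    intro σ _
    exact ENNReal.ofReal_lt_top
  have htot : (∑ σ ∈ univ.filter P, ENNReal.ofReal (hcProb Gr lam σ))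
      + (∑ σ ∈ univ.filter (fun σ => ¬ P σ), ENNReal.ofReal (hcProb Gr lam σ)) = 1 := by
    rw [Finset.sum_filter_add_sum_filter_not]
    rw [← ENNReal.ofReal_sum_of_nonneg (fun σ _ => hcProb_nonneg hl σ)]
    rw [sum_hcProb hl, ENNReal.ofReal_one]
  have hunion : (1 : ℝ≥0∞) ≤ ℙ {ω | P (Θ ω)} + ℙ {ω | ¬ P (Θ ω)} := by
    have hcov : (Set.univ : Set Ω) ⊆ {ω | P (Θ ω)} ∪ {ω | ¬ P (Θ ω)} := by
      intro ω _
      by_cases h : P (Θ ω)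
      · exact Or.inl h
      · exact Or.inr h
    calc (1 : ℝ≥0∞) = ℙ (Set.univ : Set Ω) := measure_univ.symm
      _ ≤ ℙ ({ω | P (Θ ω)} ∪ {ω | ¬ P (Θ ω)}) := measure_mono hcov
      _ ≤ ℙ {ω | P (Θ ω)} + ℙ {ω | ¬ P (Θ ω)} := measure_union_le _ _
  refine le_antisymm (hsub P inferInstance) ?_
  have h1 : (∑ σ ∈ univ.filter P, ENNReal.ofReal (hcProb Gr lam σ))
      + (∑ σ ∈ univ.filter (fun σ => ¬ P σ), ENNReal.ofReal (hcProb Gr lam σ))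
      ≤ ℙ {ω | P (Θ ω)} + (∑ σ ∈ univ.filter (fun σ => ¬ P σ),
          ENNReal.ofReal (hcProb Gr lam σ)) := by
    rw [htot]
    calc (1:ℝ≥0∞) ≤ ℙ {ω | P (Θ ω)} + ℙ {ω | ¬ P (Θ ω)} := hunion
      _ ≤ ℙ {ω | P (Θ ω)} + ∑ σ ∈ univ.filter (fun σ => ¬ P σ),
            ENNReal.ofReal (hcProb Gr lam σ) :=
          add_le_add le_rfl (hsub (fun σ => ¬ P σ) inferInstance)
  exact (ENNReal.add_le_add_iff_right (hfin (fun σ => ¬ P σ) inferInstance)).1 h1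

lemma exists_kernel (hl : 0 < lam)
    (hΘ : ∀ η₀ : V → Bool, ℙ {ω | Θ ω = η₀} = ENNReal.ofReal (hcProb Gr lam η₀))
    (σ : V → Bool) :
    ∃ D : Set Ω, MeasurableSet D ∧ D ⊆ {ω | Θ ω = σ} ∧ ℙ ({ω | Θ ω = σ} \ D) = 0 := by
  set C := toMeasurable ℙ {ω | Θ ω ≠ σ} with hCdef
  refine ⟨Cᶜ, (measurableSet_toMeasurable _ _).compl, ?_, ?_⟩
  · intro ω hω
    by_contra h
    exact hω (subset_toMeasurable _ _ h)
  · have hC : ℙ C = ℙ {ω | Θ ω ≠ σ} := measure_toMeasurable _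
    have hne : ℙ {ω | Θ ω ≠ σ} = ∑ σ' ∈ univ.filter (fun σ' => σ' ≠ σ),
        ENNReal.ofReal (hcProb Gr lam σ') := law hl hΘ (fun σ' => σ' ≠ σ)
    have heqset : ℙ {ω | Θ ω = σ} = ENNReal.ofReal (hcProb Gr lam σ) := hΘ σ
    have hsum : ENNReal.ofReal (hcProb Gr lam σ)
        + ℙ {ω | Θ ω ≠ σ} = 1 := by
      rw [hne]
      have : (∑ σ' ∈ univ.filter (fun σ' => σ' = σ), ENNReal.ofReal (hcProb Gr lam σ'))
          = ENNReal.ofReal (hcProb Gr lam σ) := by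
        rw [Finset.filter_eq' univ σ, if_pos (Finset.mem_univ σ), Finset.sum_singleton]
      rw [← this, Finset.sum_filter_add_sum_filter_not]
      rw [← ENNReal.ofReal_sum_of_nonneg (fun σ' _ => hcProb_nonneg hl σ')]
      rw [sum_hcProb hl, ENNReal.ofReal_one]
    have hCne : ℙ C ≠ ⊤ := measure_ne_top _ _
    have hDval : ℙ Cᶜ = ENNReal.ofReal (hcProb Gr lam σ) := by
      rw [measure_compl (measurableSet_toMeasurable _ _) hCne, measure_univ, hC]
      have := hsum
      rw [← this, ENNReal.add_sub_cancel_right]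
      rw [hne]
      apply ne_of_lt
      apply ENNReal.sum_lt_top.2
      intro σ' _
      exact ENNReal.ofReal_lt_top
    have hdiff : ℙ ({ω | Θ ω = σ} \ Cᶜ)
        = ℙ {ω | Θ ω = σ} - ℙ Cᶜ := by
      apply measure_diff
      · intro ω hω
        by_contra h
        exact hω (subset_toMeasurable _ _ h)
      · exact (measurableSet_toMeasurable _ _).compl.nullMeasurableSet
      · exact measure_ne_top _ _
    rw [hdiff, hDval, heqset, tsub_self]

lemma ae_eq_pred (hl : 0 < lam)
    (hΘ : ∀ η₀ : V → Bool, ℙ {ω | Θ ω = η₀} = ENNReal.ofReal (hcProb Gr lam η₀))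
    (D : (V → Bool) → Set Ω) (hDmeas : ∀ σ, MeasurableSet (D σ))
    (hDsub : ∀ σ, D σ ⊆ {ω | Θ ω = σ}) (hDnull : ∀ σ, ℙ ({ω | Θ ω = σ} \ D σ) = 0)
    (P : (V → Bool) → Prop) [DecidablePred P] :
    {ω | P (Θ ω)} =ᵐ[ℙ] ⋃ σ ∈ univ.filter P, D σ := by
  rw [MeasureTheory.ae_eq_set]
  constructor
  · have hsub2 : {ω | P (Θ ω)} \ (⋃ σ ∈ univ.filter P, D σ)
        ⊆ ⋃ σ ∈ univ.filter P, ({ω | Θ ω = σ} \ D σ) := by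
      rintro ω ⟨hω, hnω⟩
      simp only [Set.mem_iUnion, mem_filter, mem_univ, true_and]
      refine ⟨Θ ω, hω, rfl, ?_⟩
      intro h
      apply hnω
      simp only [Set.mem_iUnion, mem_filter, mem_univ, true_and]
      exact ⟨Θ ω, hω, h⟩
    refine le_antisymm (le_trans (measure_mono hsub2) ?_) zero_le
    refine le_trans (measure_biUnion_finset_le _ _) ?_
    simp only [hDnull]
    simp
  · have : (⋃ σ ∈ univ.filter P, D σ) \ {ω | P (Θ ω)} = ∅ := by
      rw [Set.diff_eq_empty]
      intro ω hω
      simp only [Set.mem_iUnion, mem_filter, mem_univ, true_and] at hω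
      obtain ⟨σ, hPσ, hωσ⟩ := hω
      have := hDsub σ hωσ
      simp only [Set.mem_setOf_eq] at this ⊢
      rw [this]
      exact hPσ
    rw [this, measure_empty]

lemma cond_toReal (hl : 0 < lam)
    (hΘ : ∀ η₀ : V → Bool, ℙ {ω | Θ ω = η₀} = ENNReal.ofReal (hcProb Gr lam η₀))
    (v : V) (τ : Bool) (S₁ : Finset V) (η : V → Bool)
    (ht : ℙ {ω | ∀ w ∈ S₁, Θ ω w = η w} ≠ 0) :
    ((ℙ : Measure Ω)[|{ω | ∀ w ∈ S₁, Θ ω w = η w}] {ω | Θ ω v = τ}).toReal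
      = pr Gr lam v τ S₁ η ∧ 0 < Z Gr lam S₁ η := by
  classical
  choose D hDmeas hDsub hDnull using fun σ : V → Bool => exists_kernel hl hΘ σ
  set t : Set Ω := {ω | ∀ w ∈ S₁, Θ ω w = η w} with htdef
  set s : Set Ω := {ω | Θ ω v = τ} with hsdef
  have hpt := partition_pos (Gr := Gr) hl
  -- measure of t
  have hμt : ℙ t = ENNReal.ofReal (Z Gr lam S₁ η / partition Gr lam) := by
    have h1 : t = {ω | (fun σ => ∀ w ∈ S₁, σ w = η w) (Θ ω)} := rfl
    rw [h1, law hl hΘ (fun σ => ∀ w ∈ S₁, σ w = η w),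
      ← ENNReal.ofReal_sum_of_nonneg (fun σ _ => hcProb_nonneg hl σ),
      sum_hc_filter]
    rfl
  have hZpos : 0 < Z Gr lam S₁ η := by
    rw [hμt] at ht
    have h2 : 0 < Z Gr lam S₁ η / partition Gr lam := by
      by_contra h
      push_neg at h
      exact ht (by rw [ENNReal.ofReal_eq_zero.2 h])
    by_contra h
    push_neg at h
    have : Z Gr lam S₁ η / partition Gr lam ≤ 0 := div_nonpos_of_nonpos_of_nonneg h hpt.le
    linarith
  -- measure of s ∩ t
  have hμst : ℙ (s ∩ t) = ENNReal.ofReal (ZV Gr lam v τ S₁ η / partition Gr lam) := by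
    have h1 : s ∩ t = {ω | (fun σ => (∀ w ∈ S₁, σ w = η w) ∧ σ v = τ) (Θ ω)} := by
      ext ω
      simp only [hsdef, htdef, Set.mem_inter_iff, Set.mem_setOf_eq]
      tauto
    rw [h1, law hl hΘ (fun σ => (∀ w ∈ S₁, σ w = η w) ∧ σ v = τ),
      ← ENNReal.ofReal_sum_of_nonneg (fun σ _ => hcProb_nonneg hl σ),
      sum_hc_filter]
    rfl
  -- restrict
  have hre : (ℙ : Measure Ω).restrict t s = ℙ (s ∩ t) := by
    set U : Set Ω := ⋃ σ ∈ univ.filter (fun σ => ∀ w ∈ S₁, σ w = η w), D σ with hUdef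
    have hUmeas : MeasurableSet U :=
      Finset.measurableSet_biUnion _ (fun σ _ => hDmeas σ)
    have haet : t =ᵐ[ℙ] U :=
      ae_eq_pred hl hΘ D hDmeas hDsub hDnull (fun σ => ∀ w ∈ S₁, σ w = η w)
    rw [Measure.restrict_congr_set haet, Measure.restrict_apply' hUmeas]
    exact measure_congr ((Filter.EventuallyEq.refl _ s).inter haet.symm)
  have hcond : (ℙ : Measure Ω)[|t] s = (ℙ t)⁻¹ * ℙ (s ∩ t) := by
    rw [ProbabilityTheory.cond]
    rw [Measure.smul_apply, smul_eq_mul, hre]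
  refine ⟨?_, hZpos⟩
  rw [hcond, ENNReal.toReal_mul, ENNReal.toReal_inv, hμt, hμst,
    ENNReal.toReal_ofReal (div_nonneg (Z_nonneg hl S₁ η) hpt.le),
    ENNReal.toReal_ofReal (div_nonneg (ZV_nonneg hl v τ S₁ η) hpt.le)]
  rw [inv_mul_eq_div, div_div_div_comm, div_self (ne_of_gt hpt), div_one]
  rfl

end Measure


/-- **Lemma A.2 (strong spatial mixing of the hard-core model)**. -/
theorem hard_core_strong_spatial_mixing (Δ : ℕ) :
    ∃ lamc : ℝ, 0 < lamc ∧
      ∀ lam : ℝ, 0 < lam → lam < lamc →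
        ∃ c : ℝ, 0 < c ∧ ∃ γ : ℝ, 0 < γ ∧
          ∀ (V : Type) [Fintype V] [DecidableEq V]
            (Gr : SimpleGraph V) [DecidableRel Gr.Adj],
            Gr.maxDegree ≤ Δ →
            ∀ (Ω : Type) [MeasureSpace Ω] [IsProbabilityMeasure (ℙ : Measure Ω)]
              (Θ : Ω → V → Bool),
              (∀ η₀ : V → Bool, ℙ {ω | Θ ω = η₀} = ENNReal.ofReal (hcProb Gr lam η₀)) →
              ∀ (v : V) (S₁ : Finset V) (τ : Bool) (η η' : V → Bool),
                ℙ {ω | ∀ w ∈ S₁, Θ ω w = η w} ≠ 0 →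
                ℙ {ω | ∀ w ∈ S₁, Θ ω w = η' w} ≠ 0 →
                |((ℙ : Measure Ω)[|{ω | ∀ w ∈ S₁, Θ ω w = η w}] {ω | Θ ω v = τ}).toReal
                  - ((ℙ : Measure Ω)[|{ω | ∀ w ∈ S₁, Θ ω w = η' w}] {ω | Θ ω v = τ}).toReal|
                  ≤ c * Real.exp (-γ *
                      ((sInf {n : ℕ | ∃ w ∈ S₁, η w ≠ η' w ∧ Gr.dist v w = n} : ℕ) : ℝ)) := by
  refine ⟨1 / (2 * ((Δ : ℝ) + 1)), by positivity, ?_⟩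
  intro lam hl hlt
  refine ⟨1, one_pos, Real.log 2, Real.log_pos one_lt_two, ?_⟩
  intro V _ _ Gr _ hΔ Ω _ _ Θ hΘ v S₁ τ η η' ht ht'
  set d := sInf {n : ℕ | ∃ w ∈ S₁, η w ≠ η' w ∧ Gr.dist v w = n} with hd
  obtain ⟨hc1, hZ⟩ := cond_toReal hl hΘ v τ S₁ η ht
  obtain ⟨hc2, hZ'⟩ := cond_toReal hl hΘ v τ S₁ η' ht'
  rw [hc1, hc2]
  have hdist : ∀ w ∈ S₁, η w ≠ η' w → ∀ p : Gr.Walk v w, d ≤ p.length := by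
    intro w hw hne p
    exact le_trans (Nat.sInf_le ⟨w, hw, hne, rfl⟩) (SimpleGraph.dist_le p)
  have hkey := key hl Δ hΔ d v S₁ η η' hZ hZ' hdist
  have hτ : |pr Gr lam v τ S₁ η - pr Gr lam v τ S₁ η'| ≤ (lam * ((Δ : ℝ) + 1)) ^ d := by
    cases τ
    · rw [pr_false_eq v S₁ η hZ, pr_false_eq v S₁ η' hZ']
      have h : (1 - pr Gr lam v true S₁ η) - (1 - pr Gr lam v true S₁ η')
          = -(pr Gr lam v true S₁ η - pr Gr lam v true S₁ η') := by ring
      rw [h, abs_neg]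
      exact hkey
    · exact hkey
  have hD1 : (0:ℝ) < (Δ : ℝ) + 1 := by positivity
  have hKle : lam * ((Δ : ℝ) + 1) ≤ 1 / 2 := by
    have h1 := mul_lt_mul_of_pos_right hlt hD1
    have h2 : 1 / (2 * ((Δ : ℝ) + 1)) * ((Δ : ℝ) + 1) = 1 / 2 := by
      field_simp
    linarith
  have hK0 : (0:ℝ) ≤ lam * ((Δ : ℝ) + 1) := by positivity
  have hexp : Real.exp (-Real.log 2 * (d : ℝ)) = ((1:ℝ) / 2) ^ d := by
    rw [mul_comm, Real.exp_nat_mul, Real.exp_neg, Real.exp_log two_pos]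
    norm_num
  calc |pr Gr lam v τ S₁ η - pr Gr lam v τ S₁ η'|
      ≤ (lam * ((Δ : ℝ) + 1)) ^ d := hτ
    _ ≤ ((1:ℝ) / 2) ^ d := pow_le_pow_left₀ hK0 hKle d
    _ = 1 * Real.exp (-Real.log 2 * (d : ℝ)) := by rw [hexp, one_mul]

end HardCore
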